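/- For every non-negative integer m, the function I_m(α) = ∫_{-∞}^{∞} t^m (1 + it)^{-1/2} e^{-(α/4)t^2 + it/2} dt is uniformly bounded for α ∈ (0, ∞); in particular I'(α) = −(1/4) I_2(α) is uniformly bounded for α > 0. -/

import Mathlib

/-!
Statement 11: For every non-negative integer m, the function
I_m(α) = ∫ℝ tᵐ (1+it)^{-1/2} e^{-(α/4)t² + it/2} dt is uniformly bounded on α ∈ (0,∞);
in particular I'(α) = −(1/4) I₂(α), which is uniformly bounded for α > 0.
-/

noncomputable section

/-- `I_m(α) = ∫ℝ tᵐ (1+it)^{-1/2} e^{-(α/4)t² + it/2} dt`, principal branch square root. -/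
def Imint (m : ℕ) (α : ℝ) : ℂ :=
  ∫ t : ℝ, (t : ℂ) ^ m * (1 + Complex.I * t) ^ (-(1 / 2 : ℂ)) *
    Complex.exp (-(α / 4) * t ^ 2 + Complex.I * t / 2)

open MeasureTheory Filter Complex Real Topology

def gI (m b : ℕ) (α : ℝ) (t : ℝ) : ℂ :=
  (t:ℂ)^m * (1 + Complex.I*t) ^ (-(1/2:ℂ) - b) * Complex.exp (-(α/4) * t^2 + Complex.I*t/2)

lemma base_ne (t : ℝ) : (1 + Complex.I*t) ≠ 0 := by
  intro h
  have : (1 + Complex.I*(t:ℂ)).re = 0 := by rw [h]; simp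
  simp at this

lemma base_slit (t : ℝ) : (1 + Complex.I*(t:ℝ)) ∈ Complex.slitPlane := by
  refine Or.inl ?_
  simp

lemma norm_cpow_eq (b : ℕ) (t : ℝ) :
    ‖(1 + Complex.I*(t:ℂ)) ^ (-(1/2:ℂ) - b)‖
      = ‖(1 + Complex.I*(t:ℂ))‖ ^ ((-(1/2:ℝ) - b)) := by
  rw [Complex.norm_cpow_of_ne_zero (base_ne t)]
  norm_num

lemma one_le_abs_base (t : ℝ) : 1 ≤ ‖(1 + Complex.I*(t:ℂ))‖ := by
  have := Complex.abs_re_le_norm (1 + Complex.I*(t:ℂ))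
  simpa using this

lemma abs_le_abs_base (t : ℝ) : |t| ≤ ‖(1 + Complex.I*(t:ℂ))‖ := by
  have := Complex.abs_im_le_norm (1 + Complex.I*(t:ℂ))
  simpa using this

lemma norm_cpow_le_one (b : ℕ) (t : ℝ) :
    ‖(1 + Complex.I*(t:ℂ)) ^ (-(1/2:ℂ) - b)‖ ≤ 1 := by
  rw [norm_cpow_eq]
  have h1 := one_le_abs_base t
  calc ‖(1 + Complex.I*(t:ℂ))‖ ^ ((-(1/2:ℝ) - b))
      ≤ ‖(1 + Complex.I*(t:ℂ))‖ ^ (0:ℝ) := by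
        apply Real.rpow_le_rpow_of_exponent_le h1
        have : (0:ℝ) ≤ b := Nat.cast_nonneg b
        linarith
    _ = 1 := by rw [Real.rpow_zero]

lemma norm_exp_term (α : ℝ) (t : ℝ) :
    ‖Complex.exp (-((α:ℂ)/4) * t^2 + Complex.I*t/2)‖ = Real.exp (-(α/4) * t^2) := by
  rw [Complex.norm_exp]
  congr 1
  have : ((t:ℂ)^2).re = t^2 ∧ ((t:ℂ)^2).im = 0 := by
    constructor <;> simp [pow_two, Complex.mul_re, Complex.mul_im]
  simp [Complex.add_re, Complex.mul_re, Complex.div_re, this.1, this.2, Complex.normSq]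

lemma norm_gI_le (m b : ℕ) (α : ℝ) (t : ℝ) :
    ‖gI m b α t‖ ≤ |t|^m * Real.exp (-(α/4) * t^2) := by
  rw [gI]
  rw [norm_mul, norm_mul, norm_exp_term]
  have h2 : (0:ℝ) ≤ Real.exp (-(α/4) * t^2) := (Real.exp_pos _).le
  refine mul_le_mul_of_nonneg_right ?_ h2
  calc ‖(t:ℂ)^m‖ * ‖(1 + Complex.I*(t:ℂ)) ^ (-(1/2:ℂ) - b)‖
        ≤ ‖(t:ℂ)^m‖ * 1 := by gcongr; exact norm_cpow_le_one b t
    _ = |t|^m := by simp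

lemma cont_gI (m b : ℕ) (α : ℝ) : Continuous (gI m b α) := by
  unfold gI
  refine (Continuous.mul (Continuous.mul ?_ ?_) ?_)
  · exact (continuous_ofReal.pow m)
  · exact Continuous.cpow (by continuity) continuous_const (fun t => base_slit t)
  · exact Complex.continuous_exp.comp (by continuity)

lemma integrable_poly_gauss (m : ℕ) {c : ℝ} (hc : 0 < c) :
    Integrable (fun t : ℝ => |t|^m * Real.exp (-c * t^2)) := by
  have h := integrable_rpow_mul_exp_neg_mul_sq hc (s := (m:ℝ))
    (lt_of_lt_of_le neg_one_lt_zero (Nat.cast_nonneg m))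
  simp_rw [Real.rpow_natCast] at h
  have h2 := h.abs
  simpa [abs_mul, abs_pow, abs_of_pos (Real.exp_pos _)] using h2

lemma integrable_gI (m b : ℕ) {α : ℝ} (hα : 0 < α) : Integrable (gI m b α) := by
  refine Integrable.mono' (integrable_poly_gauss m (by positivity : (0:ℝ) < α/4))
    (cont_gI m b α).aestronglyMeasurable ?_
  filter_upwards with t
  have := norm_gI_le m b α t
  simpa [neg_div] using this

lemma norm_J_le_integral (m b : ℕ) {α : ℝ} (hα : 0 < α) {φ : ℝ → ℝ}
    (hφ : Integrable φ) (h : ∀ t, ‖gI m b α t‖ ≤ φ t) :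
    ‖∫ t, gI m b α t‖ ≤ ∫ t, φ t :=
  norm_integral_le_of_norm_le hφ (Filter.Eventually.of_forall h)

def Cg (p : ℕ) : ℝ := ∫ u : ℝ, |u|^p * Real.exp (-(1/4) * u^2)

lemma Cg_nonneg (p : ℕ) : 0 ≤ Cg p := by
  apply integral_nonneg; intro u; positivity

lemma gauss_scale (p : ℕ) {s : ℝ} (hs : 0 < s) :
    ∫ t : ℝ, |t|^p * Real.exp (-(s^2/4) * t^2) = (s^(p+1))⁻¹ * Cg p := by
  have key := MeasureTheory.Measure.integral_comp_mul_left
    (fun u => |u|^p * Real.exp (-(1/4)*u^2)) s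
  have e1 : (fun t : ℝ => |s*t|^p * Real.exp (-(1/4)*(s*t)^2))
      = fun t : ℝ => s^p * (|t|^p * Real.exp (-(s^2/4) * t^2)) := by
    funext t
    rw [abs_mul, mul_pow, abs_of_pos hs]
    ring_nf
  rw [e1] at key
  rw [MeasureTheory.integral_const_mul] at key
  rw [smul_eq_mul, abs_of_pos (inv_pos.mpr hs)] at key
  have hsp : (s:ℝ)^p ≠ 0 := by positivity
  have : ∫ t : ℝ, |t|^p * Real.exp (-(s^2/4) * t^2)
      = (s^p)⁻¹ * (s⁻¹ * Cg p) := by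
    rw [Cg, ← key]; field_simp
  rw [this, pow_succ, mul_inv]
  ring

lemma norm_gI_le_sub (m b : ℕ) (h : b ≤ m) (α t : ℝ) :
    ‖gI m b α t‖ ≤ |t|^(m-b) * Real.exp (-(α/4)*t^2) := by
  rw [gI, norm_mul, norm_mul, norm_exp_term, norm_cpow_eq]
  refine mul_le_mul_of_nonneg_right ?_ (Real.exp_pos _).le
  set r := ‖(1 + Complex.I*(t:ℂ))‖ with hr
  have h1 : 1 ≤ r := one_le_abs_base t
  have h0 : (0:ℝ) < r := lt_of_lt_of_le one_pos h1
  have h2 : ‖(t:ℂ)^m‖ = |t|^m := by simp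
  rw [h2]
  have hb0 : (0:ℝ) ≤ (b:ℝ) := Nat.cast_nonneg b
  have e1 : r ^ (-(1/2:ℝ) - b) ≤ r ^ (-(b:ℝ)) :=
    Real.rpow_le_rpow_of_exponent_le h1 (by linarith)
  have e2 : r ^ (-(b:ℝ)) = (r^b)⁻¹ := by
    rw [Real.rpow_neg h0.le, Real.rpow_natCast]
  have step1 : |t|^m * r ^ (-(1/2:ℝ) - b) ≤ |t|^m * (r^b)⁻¹ := by
    rw [← e2]
    exact mul_le_mul_of_nonneg_left e1 (pow_nonneg (abs_nonneg t) m)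
  refine le_trans step1 ?_
  rw [mul_inv_le_iff₀ (pow_pos h0 b)]
  calc |t|^m = |t|^(m-b) * |t|^b := by rw [← pow_add, Nat.sub_add_cancel h]
    _ ≤ |t|^(m-b) * r^b := by
        exact mul_le_mul_of_nonneg_left (pow_le_pow_left₀ (abs_nonneg t) (abs_le_abs_base t) b)
          (pow_nonneg (abs_nonneg t) _)

lemma norm_gI_le_small (m b : ℕ) (h : m < b) {α : ℝ} (hα : 0 ≤ α) (t : ℝ) :
    ‖gI m b α t‖ ≤ 2^((3:ℝ)/2) * (1+|t|) ^ (-(3/2) : ℝ) := by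
  rw [gI, norm_mul, norm_mul, norm_exp_term, norm_cpow_eq]
  set r := ‖(1 + Complex.I*(t:ℂ))‖ with hr
  have h1 : 1 ≤ r := one_le_abs_base t
  have h0 : (0:ℝ) < r := lt_of_lt_of_le one_pos h1
  have h2 : ‖(t:ℂ)^m‖ = |t|^m := by simp
  have hexp : Real.exp (-(α/4) * t^2) ≤ 1 := by
    rw [Real.exp_le_one_iff]
    have : (0:ℝ) ≤ α/4 * t^2 := by positivity
    linarith
  have step0 : |t|^m * r ^ (-(1/2:ℝ) - b) * Real.exp (-(α/4) * t^2)
      ≤ |t|^m * r ^ (-(1/2:ℝ) - b) := by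
    have : (0:ℝ) ≤ |t|^m * r ^ (-(1/2:ℝ) - b) := by positivity
    nlinarith [this, hexp, Real.exp_pos (-(α/4)*t^2)]
  rw [h2]
  refine le_trans step0 ?_
  have hb1 : (m:ℝ) + 1 ≤ (b:ℝ) := by exact_mod_cast h
  have step1 : |t|^m ≤ r ^ (m:ℝ) := by
    rw [Real.rpow_natCast]
    exact pow_le_pow_left₀ (abs_nonneg t) (abs_le_abs_base t) m
  have step2 : |t|^m * r ^ (-(1/2:ℝ) - b) ≤ r ^ ((m:ℝ) + (-(1/2:ℝ) - b)) := by
    rw [Real.rpow_add h0]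
    exact mul_le_mul_of_nonneg_right step1 (Real.rpow_nonneg h0.le _)
  refine le_trans step2 ?_
  have step3 : r ^ ((m:ℝ) + (-(1/2:ℝ) - b)) ≤ r ^ (-(3/2):ℝ) :=
    Real.rpow_le_rpow_of_exponent_le h1 (by linarith)
  refine le_trans step3 ?_
  have hhalf : (1+|t|)/2 ≤ r := by
    have h3 := abs_le_abs_base t
    have : |t| ≤ r := h3
    linarith
  have hpos : (0:ℝ) < (1+|t|)/2 := by positivity
  have step4 : r ^ (-(3/2):ℝ) ≤ ((1+|t|)/2) ^ (-(3/2):ℝ) :=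
    Real.rpow_le_rpow_of_nonpos hpos hhalf (by norm_num)
  refine le_trans step4 (le_of_eq ?_)
  rw [Real.div_rpow (by positivity) (by norm_num : (0:ℝ) ≤ 2)]
  rw [div_eq_mul_inv, ← Real.rpow_neg (by norm_num : (0:ℝ) ≤ 2), neg_neg]
  ring

def C0 : ℝ := ∫ t : ℝ, 2^((3:ℝ)/2) * (1+|t|) ^ (-(3/2) : ℝ)

lemma integrable_jb : Integrable (fun t : ℝ => 2^((3:ℝ)/2) * (1+|t|) ^ (-(3/2):ℝ)) := by
  have h : Integrable (fun t : ℝ => (1+‖t‖) ^ (-(3/2):ℝ)) :=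
    integrable_one_add_norm (by simp; norm_num)
  simpa [Real.norm_eq_abs] using h.const_mul (2^((3:ℝ)/2))

lemma C0_nonneg : 0 ≤ C0 := by
  apply integral_nonneg; intro t
  positivity

lemma base_bound (m b k : ℕ) (hmk : m + 1 ≤ b + 2*k) :
    ∃ C, 0 ≤ C ∧ ∀ α : ℝ, 0 < α → α ≤ 1 → α^k * ‖∫ t, gI m b α t‖ ≤ C := by
  rcases lt_or_ge m b with hmb | hmb
  · refine ⟨C0, C0_nonneg, fun α hα hα1 => ?_⟩
    have hJ : ‖∫ t, gI m b α t‖ ≤ C0 :=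
      norm_integral_le_of_norm_le integrable_jb
        (.of_forall fun t => norm_gI_le_small m b hmb hα.le t)
    have hαk : α^k ≤ 1 := pow_le_one₀ hα.le hα1
    calc α^k * ‖∫ t, gI m b α t‖ ≤ 1 * C0 :=
          mul_le_mul hαk hJ (norm_nonneg _) zero_le_one
      _ = C0 := one_mul _
  · refine ⟨Cg (m-b), Cg_nonneg _, fun α hα hα1 => ?_⟩
    set s := Real.sqrt α with hsdef
    have hs : 0 < s := Real.sqrt_pos.mpr hα
    have hs2 : s^2 = α := Real.sq_sqrt hα.le
    have hs1 : s ≤ 1 := by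
      rw [show (1:ℝ) = Real.sqrt 1 by simp]
      exact Real.sqrt_le_sqrt hα1
    have hint : ‖∫ t, gI m b α t‖ ≤ ∫ t : ℝ, |t|^(m-b) * Real.exp (-(α/4)*t^2) :=
      norm_integral_le_of_norm_le (integrable_poly_gauss _ (by positivity))
        (.of_forall (norm_gI_le_sub m b hmb α))
    have heq : ∫ t : ℝ, |t|^(m-b) * Real.exp (-(α/4)*t^2) = (s^(m-b+1))⁻¹ * Cg (m-b) := by
      have h5 := gauss_scale (m-b) hs
      rw [hs2] at h5
      exact h5
    have hαk : α^k = s^(2*k) := by rw [← hs2, ← pow_mul, mul_comm 2 k, pow_mul]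
    calc α^k * ‖∫ t, gI m b α t‖
        ≤ s^(2*k) * ((s^(m-b+1))⁻¹ * Cg (m-b)) := by
          rw [hαk]
          exact mul_le_mul_of_nonneg_left (le_trans hint (le_of_eq heq))
            (pow_nonneg hs.le _)
      _ = s^(2*k) * (s^(m-b+1))⁻¹ * Cg (m-b) := by ring
      _ ≤ 1 * Cg (m-b) := by
          refine mul_le_mul_of_nonneg_right ?_ (Cg_nonneg _)
          rw [mul_inv_le_iff₀ (pow_pos hs _), one_mul]
          exact pow_le_pow_of_le_one hs.le hs1 (by omega)
      _ = Cg (m-b) := one_mul _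

def dgI (m b : ℕ) (α : ℝ) (t : ℝ) : ℂ :=
  (m:ℂ) * gI (m-1) b α t + Complex.I * (-(1/2:ℂ) - b) * gI m (b+1) α t
    - (α/2) * gI (m+1) b α t + (Complex.I/2) * gI m b α t

lemma hasDerivAt_gI (m b : ℕ) (α : ℝ) (t : ℝ) :
    HasDerivAt (gI m b α) (dgI m b α t) t := by
  have hP : HasDerivAt (fun t : ℝ => (t:ℂ)^m) ((m:ℂ) * (t:ℂ)^(m-1)) t :=
    (hasDerivAt_pow m (t:ℂ)).comp_ofReal
  have hWc : HasDerivAt (fun z : ℂ => (1 + Complex.I*z) ^ (-(1/2:ℂ) - b))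
      ((-(1/2:ℂ) - b) * (1 + Complex.I*t) ^ (-(1/2:ℂ) - b - 1) * Complex.I) t := by
    have hbase : HasDerivAt (fun z : ℂ => 1 + Complex.I*z) Complex.I (t:ℂ) := by
      simpa using ((hasDerivAt_id (t:ℂ)).const_mul Complex.I).const_add 1
    exact hbase.cpow_const (base_slit t)
  have hW := hWc.comp_ofReal
  have hψ : HasDerivAt (fun z : ℂ => -((α:ℂ)/4) * z^2 + Complex.I*z/2)
      (-((α:ℂ)/2) * t + Complex.I/2) (t:ℂ) := by
    have h1 : HasDerivAt (fun z : ℂ => -((α:ℂ)/4) * z^2) (-((α:ℂ)/4) * (2*(t:ℂ))) (t:ℂ) := by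
      simpa [mul_comm] using ((hasDerivAt_pow 2 (t:ℂ)).const_mul (-((α:ℂ)/4)))
    have h2 : HasDerivAt (fun z : ℂ => Complex.I*z/2) (Complex.I/2) (t:ℂ) := by
      simpa using (((hasDerivAt_id (t:ℂ)).const_mul Complex.I).div_const 2)
    have := h1.add h2
    refine this.congr_deriv ?_
    ring
  have hE : HasDerivAt (fun t : ℝ => Complex.exp (-((α:ℂ)/4) * (t:ℂ)^2 + Complex.I*t/2))
      (Complex.exp (-((α:ℂ)/4) * (t:ℂ)^2 + Complex.I*t/2) * (-((α:ℂ)/2) * t + Complex.I/2)) t :=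
    (hψ.cexp).comp_ofReal
  have hD := (hP.mul hW).mul hE
  have hexp : (1 + Complex.I*(t:ℂ)) ^ (-(1/2:ℂ) - b - 1)
      = (1 + Complex.I*(t:ℂ)) ^ (-(1/2:ℂ) - (b+1:ℕ)) := by
    congr 1
    push_cast
    ring
  refine hD.congr_deriv ?_
  unfold dgI gI
  rw [hexp] at hD ⊢
  simp only [Pi.mul_apply]
  push_cast
  ring

lemma tendsto_gauss_atTop (m : ℕ) {c : ℝ} (hc : 0 < c) :
    Tendsto (fun t : ℝ => |t|^m * Real.exp (-c * t^2)) atTop (𝓝 0) := by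
  have h1 : Tendsto (fun u : ℝ => u^m * Real.exp (-u)) atTop (𝓝 0) :=
    tendsto_pow_mul_exp_neg_atTop_nhds_zero m
  have h2 : Tendsto (fun t : ℝ => c * t^2) atTop atTop := by
    apply Tendsto.const_mul_atTop hc
    exact tendsto_pow_atTop (by norm_num)
  have h3 := h1.comp h2
  have h4 : Tendsto (fun t : ℝ => (c⁻¹)^m * ((c*t^2)^m * Real.exp (-(c*t^2)))) atTop (𝓝 0) := by
    simpa using (h3.const_mul ((c⁻¹)^m))
  apply squeeze_zero_norm' ?_ h4
  filter_upwards [eventually_ge_atTop 1] with t ht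
  rw [_root_.Real.norm_eq_abs, _root_.abs_of_nonneg (by positivity)]
  have habs : |t|^m ≤ (t^2)^m := by
    apply pow_le_pow_left₀ (abs_nonneg t)
    rw [_root_.abs_of_nonneg (by linarith : (0:ℝ) ≤ t)]
    nlinarith
  calc |t|^m * Real.exp (-c * t^2) ≤ (t^2)^m * Real.exp (-c * t^2) :=
        mul_le_mul_of_nonneg_right habs (Real.exp_pos _).le
    _ = (c⁻¹)^m * ((c*t^2)^m * Real.exp (-(c*t^2))) := by
        rw [mul_pow, neg_mul]
        have hcm : c⁻¹^m * c^m = 1 := by rw [← mul_pow, inv_mul_cancel₀ hc.ne', one_pow]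
        linear_combination (-(t^2)^m * Real.exp (-(c*t^2))) * hcm

lemma tendsto_gI_atTop (m b : ℕ) {α : ℝ} (hα : 0 < α) :
    Tendsto (gI m b α) atTop (𝓝 0) := by
  apply squeeze_zero_norm (norm_gI_le m b α)
  have := tendsto_gauss_atTop m (by positivity : (0:ℝ) < α/4)
  simpa [neg_div] using this

lemma tendsto_gI_atBot (m b : ℕ) {α : ℝ} (hα : 0 < α) :
    Tendsto (gI m b α) atBot (𝓝 0) := by
  apply squeeze_zero_norm (norm_gI_le m b α)
  have h := (tendsto_gauss_atTop m (by positivity : (0:ℝ) < α/4)).comp tendsto_neg_atBot_atTop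
  have : (fun t : ℝ => |t|^m * Real.exp (-(α/4) * t^2))
      = fun t : ℝ => |(-t)|^m * Real.exp (-(α/4) * (-t)^2) := by
    funext t; rw [abs_neg, neg_pow]; ring_nf
  rw [this]
  exact h

lemma integral_hasDeriv_eq_zero {h h' : ℝ → ℂ} (hd : ∀ t, HasDerivAt h (h' t) t)
    (hi : Integrable h') (htop : Tendsto h atTop (𝓝 0)) (hbot : Tendsto h atBot (𝓝 0)) :
    ∫ t : ℝ, h' t = 0 := by
  have l1 : Tendsto (fun R : ℝ => ∫ t in (-R)..R, h' t) atTop (𝓝 (∫ t, h' t)) :=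
    intervalIntegral_tendsto_integral hi tendsto_neg_atTop_atBot tendsto_id
  have l2 : ∀ R : ℝ, ∫ t in (-R)..R, h' t = h R - h (-R) := fun R =>
    intervalIntegral.integral_eq_sub_of_hasDerivAt (fun x _ => hd x)
      hi.intervalIntegrable
  have l3 : Tendsto (fun R : ℝ => h R - h (-R)) atTop (𝓝 (0 - 0)) :=
    htop.sub (hbot.comp tendsto_neg_atTop_atBot)
  rw [show (0:ℂ) - 0 = 0 by ring] at l3
  have := tendsto_nhds_unique (l1.congr (fun R => l2 R)) l3
  exact this

def J (m b : ℕ) (α : ℝ) : ℂ := ∫ t : ℝ, gI m b α t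

lemma integrable_dgI (m b : ℕ) {α : ℝ} (hα : 0 < α) : Integrable (dgI m b α) := by
  unfold dgI
  exact ((((integrable_gI (m-1) b hα).const_mul _).add
    ((integrable_gI m (b+1) hα).const_mul _)).sub
    ((integrable_gI (m+1) b hα).const_mul _)).add ((integrable_gI m b hα).const_mul _)

lemma integral_dgI_eq (m b : ℕ) {α : ℝ} (hα : 0 < α) :
    ∫ t, dgI m b α t = (m:ℂ) * J (m-1) b α + Complex.I * (-(1/2:ℂ) - b) * J m (b+1) α
      - (α/2) * J (m+1) b α + (Complex.I/2) * J m b α := by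
  unfold dgI J
  have i1 : Integrable (fun a : ℝ => (m:ℂ) * gI (m-1) b α a) := (integrable_gI (m-1) b hα).const_mul _
  have i2 : Integrable (fun a : ℝ => Complex.I * (-(1/2:ℂ) - b) * gI m (b+1) α a) := (integrable_gI m (b+1) hα).const_mul _
  have i3 : Integrable (fun a : ℝ => ((α:ℂ)/2) * gI (m+1) b α a) := (integrable_gI (m+1) b hα).const_mul _
  have i4 : Integrable (fun a : ℝ => (Complex.I/2) * gI m b α a) := (integrable_gI m b hα).const_mul _
  have i12 : Integrable (fun a : ℝ => (m:ℂ) * gI (m-1) b α a + Complex.I * (-(1/2:ℂ) - b) * gI m (b+1) α a) := i1.add i2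
  have i123 : Integrable (fun a : ℝ => (m:ℂ) * gI (m-1) b α a + Complex.I * (-(1/2:ℂ) - b) * gI m (b+1) α a - ((α:ℂ)/2) * gI (m+1) b α a) := i12.sub i3
  rw [integral_add i123 i4, integral_sub i12 i3, integral_add i1 i2,
      integral_const_mul, integral_const_mul, integral_const_mul, integral_const_mul]

lemma ibp (m b : ℕ) {α : ℝ} (hα : 0 < α) :
    J m b α = 2*Complex.I*((m:ℂ) * J (m-1) b α
      + Complex.I * (-(1/2:ℂ) - b) * J m (b+1) α - (α/2) * J (m+1) b α) := by
  have hz : ∫ t, dgI m b α t = 0 :=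
    integral_hasDeriv_eq_zero (hasDerivAt_gI m b α) (integrable_dgI m b hα)
      (tendsto_gI_atTop m b hα) (tendsto_gI_atBot m b hα)
  rw [integral_dgI_eq m b hα] at hz
  linear_combination (-2*Complex.I) * hz + (J m b α) * Complex.I_sq

lemma norm_J_rec (m b : ℕ) {α : ℝ} (hα : 0 < α) :
    ‖J m b α‖ ≤ 2*((m:ℝ)*‖J (m-1) b α‖ + ((1:ℝ)/2+b)*‖J m (b+1) α‖
      + (α/2)*‖J (m+1) b α‖) := by
  rw [ibp m b hα]
  have e0 : ‖(2*Complex.I : ℂ)‖ = 2 := by simp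
  rw [norm_mul, e0]
  have h1 : ‖(m:ℂ) * J (m-1) b α‖ = (m:ℝ) * ‖J (m-1) b α‖ := by
    rw [norm_mul]; norm_num
  have h2 : ‖Complex.I * (-(1/2:ℂ) - b) * J m (b+1) α‖ = ((1:ℝ)/2+b) * ‖J m (b+1) α‖ := by
    rw [norm_mul, norm_mul]
    have e : (-(1/2:ℂ) - b) = ((-(1/2) - b : ℝ) : ℂ) := by push_cast; ring
    have hb : (0:ℝ) ≤ (b:ℝ) := Nat.cast_nonneg b
    rw [e, Complex.norm_real, _root_.Real.norm_eq_abs,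
      _root_.abs_of_nonpos (by linarith), Complex.norm_I, one_mul]
    ring
  have h3 : ‖((α:ℂ)/2) * J (m+1) b α‖ = (α/2) * ‖J (m+1) b α‖ := by
    rw [norm_mul]
    have : ‖((α:ℂ)/2)‖ = α/2 := by
      rw [show ((α:ℂ)/2) = ((α/2 : ℝ) : ℂ) by push_cast; ring, Complex.norm_real,
        _root_.Real.norm_eq_abs, _root_.abs_of_nonneg (by linarith)]
    rw [this]
  have tri : ‖(m:ℂ) * J (m-1) b α + Complex.I * (-(1/2:ℂ) - b) * J m (b+1) α
      - ((α:ℂ)/2) * J (m+1) b α‖ ≤ ‖(m:ℂ) * J (m-1) b α‖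
      + ‖Complex.I * (-(1/2:ℂ) - b) * J m (b+1) α‖ + ‖((α:ℂ)/2) * J (m+1) b α‖ :=
    le_trans (norm_sub_le _ _) (by gcongr; exact norm_add_le _ _)
  rw [h1, h2, h3] at tri
  linarith

lemma main_bound : ∀ N m b k : ℕ, m + 1 ≤ b + 2*k + N →
    ∃ C, 0 ≤ C ∧ ∀ α : ℝ, 0 < α → α ≤ 1 → α^k * ‖J m b α‖ ≤ C := by
  intro N
  induction N with
  | zero =>
    intro m b k h
    exact base_bound m b k (by omega)
  | succ N ih =>
    intro m b k h
    rcases le_or_gt (m+1) (b + 2*k + N) with h' | h'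
    · exact ih m b k h'
    obtain ⟨C1, hC1n, hC1⟩ : ∃ C, 0 ≤ C ∧ ∀ α : ℝ, 0 < α → α ≤ 1 →
        (m:ℝ) * (α^k * ‖J (m-1) b α‖) ≤ C := by
      rcases Nat.eq_zero_or_pos m with hm | hm
      · exact ⟨0, le_refl 0, fun α _ _ => by simp [hm]⟩
      · obtain ⟨C, hCn, hC⟩ := ih (m-1) b k (by omega)
        refine ⟨m * C, by positivity, fun α hα hα1 => ?_⟩
        exact mul_le_mul_of_nonneg_left (hC α hα hα1) (Nat.cast_nonneg m)
    obtain ⟨C2, hC2n, hC2⟩ := ih m (b+1) k (by omega)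
    obtain ⟨C3, hC3n, hC3⟩ := ih (m+1) b (k+1) (by omega)
    refine ⟨2*(C1 + ((1:ℝ)/2+b)*C2 + (1/2)*C3), by positivity, fun α hα hα1 => ?_⟩
    have hrec := norm_J_rec m b hα
    have hk : (0:ℝ) ≤ α^k := by positivity
    have step : α^k * ‖J m b α‖ ≤ 2*((m:ℝ)*(α^k*‖J (m-1) b α‖)
        + ((1:ℝ)/2+b)*(α^k*‖J m (b+1) α‖) + (1/2)*(α^(k+1)*‖J (m+1) b α‖)) := by
      calc α^k * ‖J m b α‖
          ≤ α^k * (2*((m:ℝ)*‖J (m-1) b α‖ + ((1:ℝ)/2+b)*‖J m (b+1) α‖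
            + (α/2)*‖J (m+1) b α‖)) := mul_le_mul_of_nonneg_left hrec hk
        _ = 2*((m:ℝ)*(α^k*‖J (m-1) b α‖) + ((1:ℝ)/2+b)*(α^k*‖J m (b+1) α‖)
            + (1/2)*(α^(k+1)*‖J (m+1) b α‖)) := by rw [pow_succ]; ring
    refine le_trans step ?_
    have t1 := hC1 α hα hα1
    have t2 : ((1:ℝ)/2+b)*(α^k*‖J m (b+1) α‖) ≤ ((1:ℝ)/2+b)*C2 :=
      mul_le_mul_of_nonneg_left (hC2 α hα hα1) (by positivity)
    have t3 : (α^(k+1)*‖J (m+1) b α‖) ≤ C3 := hC3 α hα hα1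
    linarith

lemma Imint_eq_J (m : ℕ) (α : ℝ) : Imint m α = J m 0 α := by
  simp [Imint, J, gI]

lemma large_alpha (m : ℕ) {α : ℝ} (hα : 1 ≤ α) : ‖J m 0 α‖ ≤ Cg m := by
  have h0 : (0:ℝ) < α := lt_of_lt_of_le one_pos hα
  refine le_trans (norm_integral_le_of_norm_le (integrable_poly_gauss m (by norm_num : (0:ℝ) < 1/4)) (.of_forall fun t => ?_)) (le_of_eq rfl)
  refine le_trans (norm_gI_le m 0 α t) ?_
  have : Real.exp (-(α/4) * t^2) ≤ Real.exp (-(1/4) * t^2) := by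
    apply Real.exp_le_exp.mpr
    nlinarith [sq_nonneg t]
  exact mul_le_mul_of_nonneg_left this (by positivity)

lemma part1 (m : ℕ) : ∃ C : ℝ, ∀ α : ℝ, 0 < α → ‖Imint m α‖ ≤ C := by
  obtain ⟨C, hCn, hC⟩ := main_bound (m+1) m 0 0 (by omega)
  refine ⟨max C (Cg m), fun α hα => ?_⟩
  rw [Imint_eq_J]
  rcases le_or_gt α 1 with h1 | h1
  · have := hC α hα h1
    simp only [pow_zero, one_mul] at this
    exact le_trans this (le_max_left _ _)
  · exact le_trans (large_alpha m h1.le) (le_max_right _ _)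

lemma hasDerivAt_in_alpha (t : ℝ) (x : ℝ) :
    HasDerivAt (fun a : ℝ => gI 0 0 a t) ((-(t:ℂ)^2/4) * gI 0 0 x t) x := by
  have hc : HasDerivAt (fun z : ℂ => -(z/4) * (t:ℂ)^2 + Complex.I*t/2)
      (-(t:ℂ)^2/4) (x:ℂ) := by
    have h1 : HasDerivAt (fun z : ℂ => -(z/4) * (t:ℂ)^2) (-(1/4) * (t:ℂ)^2) (x:ℂ) := by
      simpa using (((hasDerivAt_id (x:ℂ)).div_const 4).neg.mul_const ((t:ℂ)^2))
    have h2 := h1.add_const (Complex.I*(t:ℂ)/2)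
    refine h2.congr_deriv ?_
    · ring
  have hE := hc.cexp.comp_ofReal
  have hC := hE.const_mul ((t:ℂ)^(0:ℕ) * (1 + Complex.I*(t:ℂ)) ^ (-(1/2:ℂ) - (0:ℕ)))
  have hfun : (fun a : ℝ => ((t:ℂ)^(0:ℕ) * (1 + Complex.I*(t:ℂ)) ^ (-(1/2:ℂ) - (0:ℕ)))
      * Complex.exp (-((a:ℂ)/4) * (t:ℂ)^2 + Complex.I*t/2)) = fun a : ℝ => gI 0 0 a t := by
    funext a
    rw [gI]
  rw [hfun] at hC
  refine hC.congr_deriv ?_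
  rw [gI]
  ring

lemma part2 {α : ℝ} (hα : 0 < α) :
    HasDerivAt (fun a : ℝ => Imint 0 a) (-(1/4) * Imint 2 α) α := by
  have hb : Integrable (fun t : ℝ => (1/4) * (|t|^2 * Real.exp (-(α/8) * t^2))) :=
    (integrable_poly_gauss 2 (by positivity)).const_mul _
  have key := hasDerivAt_integral_of_dominated_loc_of_deriv_le
    (F := fun (a : ℝ) (t : ℝ) => gI 0 0 a t)
    (F' := fun (a : ℝ) (t : ℝ) => (-(t:ℂ)^2/4) * gI 0 0 a t)
    (x₀ := α) (s := Metric.ball α (α/2))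
    (bound := fun t => (1/4) * (|t|^2 * Real.exp (-(α/8) * t^2)))
    (Metric.ball_mem_nhds α (by positivity))
    (Filter.Eventually.of_forall fun x => (cont_gI 0 0 x).aestronglyMeasurable)
    (integrable_gI 0 0 hα)
    (((((continuous_ofReal.pow 2).neg).div_const 4).mul (cont_gI 0 0 α)).aestronglyMeasurable)
    ?_ hb
    (Filter.Eventually.of_forall fun t x _ => hasDerivAt_in_alpha t x)
  · obtain ⟨-, hd⟩ := key
    have hfun : (fun a : ℝ => ∫ t : ℝ, gI 0 0 a t) = fun a : ℝ => Imint 0 a := by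
      funext a
      rw [Imint_eq_J]; rfl
    rw [hfun] at hd
    have hval : ∫ t : ℝ, (-(t:ℂ)^2/4) * gI 0 0 α t = -(1/4) * Imint 2 α := by
      have e : (fun t : ℝ => (-(t:ℂ)^2/4) * gI 0 0 α t)
          = fun t : ℝ => (-(1/4) : ℂ) * gI 2 0 α t := by
        funext t
        rw [gI, gI]
        ring
      rw [e, integral_const_mul, Imint_eq_J]
      rfl
    rwa [hval] at hd
  · filter_upwards with t
    intro x hx
    have hx2 : α/2 < x := by
      rw [Metric.mem_ball, Real.dist_eq] at hx
      rcases abs_lt.mp hx with ⟨h1, h2⟩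
      linarith
    have h1 : ‖(-(t:ℂ)^2/4) * gI 0 0 x t‖ = t^2/4 * ‖gI 0 0 x t‖ := by
      rw [norm_mul]
      congr 1
      rw [show (-(t:ℂ)^2/4) = (((-t^2/4 : ℝ)) : ℂ) by push_cast; ring, Complex.norm_real,
        _root_.Real.norm_eq_abs, abs_div, _root_.abs_neg, _root_.abs_pow, _root_.sq_abs]
      norm_num
    rw [h1]
    have h2 : ‖gI 0 0 x t‖ ≤ Real.exp (-(α/8) * t^2) := by
      refine le_trans (norm_gI_le 0 0 x t) ?_
      simp only [pow_zero, one_mul]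
      apply Real.exp_le_exp.mpr
      nlinarith [sq_nonneg t]
    calc t^2/4 * ‖gI 0 0 x t‖ ≤ t^2/4 * Real.exp (-(α/8) * t^2) := by
          exact mul_le_mul_of_nonneg_left h2 (by positivity)
      _ = (1/4) * (|t|^2 * Real.exp (-(α/8) * t^2)) := by rw [_root_.sq_abs]; ring

theorem Imint_uniformly_bounded :
    (∀ m : ℕ, ∃ C : ℝ, ∀ α : ℝ, 0 < α → ‖Imint m α‖ ≤ C) ∧
    (∀ α : ℝ, 0 < α → HasDerivAt (fun a : ℝ => Imint 0 a) (-(1 / 4) * Imint 2 α) α) :=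
  ⟨part1, fun _ hα => part2 hα⟩

end
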